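/- Let b1, b2, b3 be pairwise distinct real numbers with b1 + b2 + b3 = 0 and b1^2 + b2^2 + b3^2 = 2/3, all nonzero. Suppose real numbers C1, C2, C3 and a symmetric array T (with T_{ijk} invariant under all permutations of distinct indices i, j, k from {1,2,3}) satisfy b_k * T_{ijk} = -(4/3) * (C1*C2*C3)/(b1*b2*b3) for every permutation (i,j,k) of (1,2,3). Then T_{123} = 0 and C1*C2*C3 = 0. -/

import Mathlib

theorem stmt_12 (b C : Fin 3 → ℝ)
    (hdist : ∀ i j, i ≠ j → b i ≠ b j)
    (hsum : b 0 + b 1 + b 2 = 0)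
    (hsq : (b 0)^2 + (b 1)^2 + (b 2)^2 = 2/3)
    (hnz : ∀ i, b i ≠ 0)
    (T : Fin 3 → Fin 3 → Fin 3 → ℝ)
    (hTsym : ∀ (i j k : Fin 3) (σ : Equiv.Perm (Fin 3)),
      T (σ i) (σ j) (σ k) = T i j k)
    (hT : ∀ i j k : Fin 3, i ≠ j → j ≠ k → i ≠ k →
      b k * T i j k = -(4/3) * (C 0 * C 1 * C 2) / (b 0 * b 1 * b 2)) :
    T 0 1 2 = 0 ∧ C 0 * C 1 * C 2 = 0 := by
  set σ : Equiv.Perm (Fin 3) := (Equiv.swap 0 1).trans (Equiv.swap 1 2) with hσ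
  have h1 : T 2 0 1 = T 0 1 2 := by
    have := hTsym 0 1 2 σ
    simpa [hσ, Equiv.swap_apply_of_ne_of_ne] using this
  have h2 : T 1 2 0 = T 0 1 2 := by
    have := hTsym 0 1 2 (σ.trans σ)
    simpa [hσ, Equiv.swap_apply_of_ne_of_ne] using this
  have e1 := hT 0 1 2 (by decide) (by decide) (by decide)
  have e2 := hT 1 2 0 (by decide) (by decide) (by decide)
  have e3 := hT 2 0 1 (by decide) (by decide) (by decide)
  rw [h2] at e2
  rw [h1] at e3
  have hb01 : b 0 ≠ b 1 := hdist 0 1 (by decide)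
  have ht : T 0 1 2 = 0 := by
    have : (b 0 - b 1) * T 0 1 2 = 0 := by linarith [e2, e3]
    rcases mul_eq_zero.mp this with h | h
    · exact absurd (sub_eq_zero.mp h) hb01
    · exact h
  refine ⟨ht, ?_⟩
  rw [ht, mul_zero] at e1
  have hbprod : b 0 * b 1 * b 2 ≠ 0 :=
    mul_ne_zero (mul_ne_zero (hnz 0) (hnz 1)) (hnz 2)
  field_simp at e1
  have hq : 4 * C 0 * C 1 * C 2 / (b 0 * b 1 * b 2) = 0 := by linarith
  rcases div_eq_zero_iff.mp hq with h | h
  · linarith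
  · exact absurd h hbprod
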